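/- Let A ⊂ ℝ^d (d ≥ 2) be a Λ-Lipschitz domain with bounded boundary. Then there exists δ₀ > 0 such that for every δ ∈ (0, δ₀], the set A_δ = {x ∈ A : dist(x, ∂A) > δ} is again a Λ-Lipschitz domain (with the same Lipschitz constant Λ), where dist(x, ∂A) is the Euclidean (infimum) distance from x to the boundary of A. -/

import Mathlib

open Metric Set

noncomputable section

set_option maxHeartbeats 1000000

/-- `ℝ^n` with the Euclidean norm. -/
abbrev Euc (n : ℕ) := EuclideanSpace ℝ (Fin n)

/-- The space `ℝ^{d-1} × ℝ` equipped with the Euclidean (l²) product distance. -/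
abbrev Pt (d : ℕ) := WithLp 2 (Euc (d - 1) × ℝ)

/-- First (horizontal) component of a point of `ℝ^{d-1} × ℝ`. -/
def fstPt (d : ℕ) (p : Pt d) : Euc (d - 1) := (WithLp.equiv 2 (Euc (d - 1) × ℝ) p).1

/-- Second (vertical) component of a point of `ℝ^{d-1} × ℝ`. -/
def sndPt (d : ℕ) (p : Pt d) : ℝ := (WithLp.equiv 2 (Euc (d - 1) × ℝ) p).2

/-- An open set `A ⊆ ℝ^d` is a `Λ`-Lipschitz domain if its boundary is bounded and near
each boundary point, after a rigid motion (an affine Euclidean isometry, here an isometric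
equivalence of `ℝ^d` with `ℝ^{d-1} × ℝ`), `A` coincides with the open epigraph of a
`Λ`-Lipschitz function `f : ℝ^{d-1} → ℝ`. -/
def IsLipschitzDomain (d : ℕ) (Λ : ℝ) (A : Set (Euc d)) : Prop :=
  IsOpen A ∧ Bornology.IsBounded (frontier A) ∧
    ∀ p ∈ frontier A, ∃ V : Set (Euc d), IsOpen V ∧ p ∈ V ∧
      ∃ T : Euc d ≃ᵢ Pt d, ∃ f : Euc (d - 1) → ℝ, LipschitzWith Λ.toNNReal f ∧
        T '' (A ∩ V) = (T '' V) ∩ { q : Pt d | f (fstPt d q) < sndPt d q }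

/-! ### Auxiliary definitions and lemmas -/

section Aux

variable {m : ℕ}

/-- Abbreviation for the model space. -/
local notation "E" => EuclideanSpace ℝ (Fin m)
local notation "P" => WithLp 2 (EuclideanSpace ℝ (Fin m) × ℝ)

def pmk (x : E) (y : ℝ) : P := (WithLp.equiv 2 (E × ℝ)).symm (x, y)
def fstP (q : P) : E := (WithLp.equiv 2 (E × ℝ) q).1
def sndP (q : P) : ℝ := (WithLp.equiv 2 (E × ℝ) q).2

lemma fstP_pmk (x : E) (y : ℝ) : fstP (pmk x y) = x := rfl
lemma sndP_pmk (x : E) (y : ℝ) : sndP (pmk x y) = y := rfl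
lemma pmk_eta (q : P) : pmk (fstP q) (sndP q) = q := rfl

lemma cont_fst : Continuous (fstP (m := m)) :=
  continuous_fst.comp (WithLp.prodContinuousLinearEquiv 2 ℝ E ℝ).continuous
lemma cont_snd : Continuous (sndP (m := m)) :=
  continuous_snd.comp (WithLp.prodContinuousLinearEquiv 2 ℝ E ℝ).continuous

/-- The open epigraph of `f`. -/
def epi (f : E → ℝ) : Set P := {q | f (fstP q) < sndP q}
/-- The graph of `f`. -/
def gph (f : E → ℝ) : Set P := {q | sndP q = f (fstP q)}

lemma isOpen_epi {f : E → ℝ} (hf : Continuous f) : IsOpen (epi f) :=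
  isOpen_lt (hf.comp cont_fst) cont_snd

lemma isClosed_gph {f : E → ℝ} (hf : Continuous f) : IsClosed (gph f) :=
  isClosed_eq cont_snd (hf.comp cont_fst)

lemma closure_epi {f : E → ℝ} (hf : Continuous f) :
    closure (epi f) = {q | f (fstP q) ≤ sndP q} := by
  apply subset_antisymm
  · exact closure_minimal (fun q (hq : f (fstP q) < sndP q) => le_of_lt hq)
      (isClosed_le (hf.comp cont_fst) cont_snd)
  · intro q hq
    have : Filter.Tendsto (fun n : ℕ => pmk (fstP q) (sndP q + 1/(n+1))) Filter.atTop (nhds q) := by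
      have h1 : Filter.Tendsto (fun n : ℕ => sndP q + 1/(n+1 : ℝ)) Filter.atTop (nhds (sndP q)) := by
        simpa using (tendsto_const_nhds (x := sndP q)).add tendsto_one_div_add_atTop_nhds_zero_nat
      have h2 : Filter.Tendsto (fun n : ℕ => ((fstP q, sndP q + 1/(n+1 : ℝ)) : E × ℝ))
          Filter.atTop (nhds (fstP q, sndP q)) :=
        Filter.Tendsto.prodMk_nhds tendsto_const_nhds h1
      exact ((WithLp.prodContinuousLinearEquiv 2 ℝ E ℝ).symm.continuous.tendsto _).comp h2
    refine mem_closure_of_tendsto this ?_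
    filter_upwards with n
    show f (fstP _) < sndP _
    rw [fstP_pmk, sndP_pmk]
    have : (0:ℝ) < 1/(n+1) := by positivity
    calc f (fstP q) ≤ sndP q := hq
      _ < sndP q + 1/(n+1) := by linarith

lemma frontier_epi {f : E → ℝ} (hf : Continuous f) : frontier (epi f) = gph f := by
  rw [frontier, (isOpen_epi hf).interior_eq, closure_epi hf]
  ext q
  simp only [mem_diff, mem_setOf_eq, epi, gph, Set.mem_setOf_eq]
  constructor
  · rintro ⟨h1, h2⟩; linarith [not_lt.mp h2]
  · intro h; constructor <;> [linarith; simp [h]]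

/-- Sup-convolution of `f` at scale `δ`: the supremum of `f` over the trace of the sphere of
radius `δ` centered at the given point lying on the graph of `f`. -/
def supc (f : E → ℝ) (δ : ℝ) (x : E) : ℝ :=
  sSup ((fun w => f (x + w) + Real.sqrt (δ^2 - ‖w‖^2)) '' closedBall 0 δ)

lemma supc_isGreatest {f : E → ℝ} (hf : Continuous f) {δ : ℝ} (hδ : 0 ≤ δ) (x : E) :
    ∃ w₀ ∈ closedBall (0 : E) δ,
      IsGreatest ((fun w => f (x + w) + Real.sqrt (δ^2 - ‖w‖^2)) '' closedBall 0 δ)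
        (f (x + w₀) + Real.sqrt (δ^2 - ‖w₀‖^2)) := by
  obtain ⟨w₀, hw₀, hmax⟩ :=
    (isCompact_closedBall (0 : E) δ).exists_isMaxOn (f := fun w => f (x + w) + Real.sqrt (δ^2 - ‖w‖^2))
      ⟨0, mem_closedBall_self hδ⟩ (Continuous.continuousOn (by continuity))
  exact ⟨w₀, hw₀, ⟨mem_image_of_mem _ hw₀, by rintro y ⟨w, hw, rfl⟩; exact hmax hw⟩⟩

lemma supc_eq {f : E → ℝ} (hf : Continuous f) {δ : ℝ} (hδ : 0 ≤ δ) (x : E) :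
    ∃ w₀ ∈ closedBall (0 : E) δ,
      supc f δ x = f (x + w₀) + Real.sqrt (δ^2 - ‖w₀‖^2) := by
  obtain ⟨w₀, hw₀, hg⟩ := supc_isGreatest hf hδ x
  exact ⟨w₀, hw₀, hg.csSup_eq⟩

lemma le_supc {f : E → ℝ} (hf : Continuous f) {δ : ℝ} (hδ : 0 ≤ δ) (x : E)
    {w : E} (hw : w ∈ closedBall (0 : E) δ) :
    f (x + w) + Real.sqrt (δ^2 - ‖w‖^2) ≤ supc f δ x := by
  obtain ⟨w₀, hw₀, hg⟩ := supc_isGreatest hf hδ x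
  rw [supc, hg.csSup_eq]
  exact hg.2 (mem_image_of_mem _ hw)

lemma supc_ge {f : E → ℝ} (hf : Continuous f) {δ : ℝ} (hδ : 0 ≤ δ) (x : E) :
    f x + δ ≤ supc f δ x := by
  have := le_supc hf hδ x (w := 0) (mem_closedBall_self hδ)
  simpa [Real.sqrt_sq hδ] using this

lemma supc_lipschitz {f : E → ℝ} {L : NNReal} (hf : LipschitzWith L f) {δ : ℝ} (hδ : 0 ≤ δ) :
    LipschitzWith L (supc f δ) := by
  have key : ∀ x x' : E, supc f δ x ≤ supc f δ x' + L * dist x x' := by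
    intro x x'
    obtain ⟨w₀, hw₀, hg⟩ := supc_eq hf.continuous hδ x
    rw [hg]
    have h1 : f (x + w₀) ≤ f (x' + w₀) + L * dist x x' := by
      have := hf.dist_le_mul (x + w₀) (x' + w₀)
      rw [Real.dist_eq] at this
      rw [dist_add_right] at this
      have h3 := le_trans (le_abs_self (f (x + w₀) - f (x' + w₀))) this
      linarith
    have h4 := le_supc hf.continuous hδ x' hw₀
    linarith
  apply LipschitzWith.of_dist_le_mul
  intro x x'
  rw [Real.dist_eq, abs_le]
  constructor
  · have := key x' x; rw [dist_comm] at this; linarith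
  · have := key x x'; linarith

lemma dist_pmk (x z : E) (y w : ℝ) :
    dist (pmk x y) (pmk z w) = Real.sqrt (dist x z ^ 2 + (y - w) ^ 2) := by
  rw [WithLp.prod_dist_eq_of_L2]
  simp [pmk, Real.dist_eq, sq_abs]

lemma gph_nonempty (f : E → ℝ) : (gph f).Nonempty := ⟨pmk 0 (f 0), rfl⟩

/-- Key lemma: for a point strictly above the graph, being within distance `δ` of the graph is
the same as lying below the sup-convolution `supc f δ`. -/
lemma infDist_gph_le_iff {f : E → ℝ} (hf : Continuous f) {δ : ℝ} (hδ : 0 < δ)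
    {x : E} {y : ℝ} (hy : f x < y) :
    infDist (pmk x y) (gph f) ≤ δ ↔ y ≤ supc f δ x := by
  constructor
  · intro h
    obtain ⟨z, hz, hdz⟩ := (isClosed_gph hf).exists_infDist_eq_dist (gph_nonempty f) (pmk x y)
    rw [hdz] at h
    have hz' : sndP z = f (fstP z) := hz
    have hzeq : z = pmk (fstP z) (sndP z) := rfl
    rw [hzeq, dist_pmk] at h
    set a := dist x (fstP z) with ha
    have ha0 : 0 ≤ a := dist_nonneg
    have hsum : a^2 + (y - sndP z)^2 ≤ δ^2 := by
      have h2 : Real.sqrt (a ^ 2 + (y - sndP z) ^ 2) ≤ δ := h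
      nlinarith [Real.sq_sqrt (by positivity : (0:ℝ) ≤ a ^ 2 + (y - sndP z) ^ 2),
        Real.sqrt_nonneg (a ^ 2 + (y - sndP z) ^ 2)]
    set w := fstP z - x with hwdef
    have hnw : ‖w‖ = a := by rw [hwdef, ha, dist_eq_norm']
    have hwball : w ∈ closedBall (0 : E) δ := by
      simp only [mem_closedBall, dist_zero_right, hnw]
      nlinarith
    have hxw : x + w = fstP z := by rw [hwdef]; abel
    have hb : y - f (fstP z) ≤ Real.sqrt (δ^2 - a^2) := by
      calc y - f (fstP z) ≤ |y - sndP z| := by rw [hz']; exact le_abs_self _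
        _ = Real.sqrt ((y - sndP z)^2) := (Real.sqrt_sq_eq_abs _).symm
        _ ≤ Real.sqrt (δ^2 - a^2) := Real.sqrt_le_sqrt (by nlinarith)
    have := le_supc hf (le_of_lt hδ) x hwball
    rw [hxw, hnw] at this
    linarith
  · intro h
    obtain ⟨w₀, hw₀, hgr⟩ := supc_eq hf (le_of_lt hδ) x
    set s₀ := Real.sqrt (δ^2 - ‖w₀‖^2) with hs₀
    have hw₀n : ‖w₀‖ ≤ δ := by simpa using hw₀
    have hs₀sq : s₀^2 = δ^2 - ‖w₀‖^2 := Real.sq_sqrt (by nlinarith [norm_nonneg w₀])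
    have hs₀0 : 0 ≤ s₀ := Real.sqrt_nonneg _
    set z := x + w₀ with hzdef
    by_cases hcase : f z - s₀ ≤ y
    · have hyz : |y - f z| ≤ s₀ := by
        rw [abs_le]
        constructor
        · linarith
        · have : y ≤ f z + s₀ := by rw [hgr] at h; exact h
          linarith
      have hd : dist (pmk x y) (pmk z (f z)) ≤ δ := by
        rw [dist_pmk]
        have hdxz : dist x z = ‖w₀‖ := by rw [hzdef, dist_eq_norm]; simp
        rw [hdxz]
        have : ‖w₀‖^2 + (y - f z)^2 ≤ δ^2 := by
          have := sq_le_sq' (neg_le_of_neg_le (by linarith [abs_le.mp hyz])) (abs_le.mp hyz).2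
          nlinarith [sq_abs (y - f z)]
        calc Real.sqrt (‖w₀‖ ^ 2 + (y - f z) ^ 2) ≤ Real.sqrt (δ^2) := Real.sqrt_le_sqrt this
          _ = δ := Real.sqrt_sq (le_of_lt hδ)
      exact le_trans (infDist_le_dist_of_mem (s := gph f) rfl) hd
    · push_neg at hcase
      set g : ℝ → ℝ := fun t => f (x + t • w₀) - Real.sqrt (δ^2 - ‖t • w₀‖^2) - y with hgdef
      have hgc : ContinuousOn g (Icc 0 1) := by
        apply Continuous.continuousOn
        apply Continuous.sub
        apply Continuous.sub
        · exact hf.comp (by continuity)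
        · exact Real.continuous_sqrt.comp (by continuity)
        · exact continuous_const
      have hg0 : g 0 < 0 := by
        simp only [hgdef, zero_smul, add_zero, norm_zero]
        have : Real.sqrt (δ^2 - 0^2) = δ := by
          rw [(by ring : δ^2 - 0^2 = δ^2), Real.sqrt_sq (le_of_lt hδ)]
        simp only [(by norm_num : (0:ℝ)^2 = 0), sub_zero] at this ⊢
        rw [this]
        linarith
      have hg1 : 0 < g 1 := by
        simp only [hgdef, one_smul]
        rw [← hzdef, ← hs₀]
        linarith
      have : (0:ℝ) ∈ Icc (g 0) (g 1) := ⟨le_of_lt hg0, le_of_lt hg1⟩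
      obtain ⟨t, ht, hgt⟩ := intermediate_value_Icc (by norm_num : (0:ℝ) ≤ 1) hgc this
      set w := t • w₀ with hwdef
      have htI : 0 ≤ t ∧ t ≤ 1 := ⟨ht.1, ht.2⟩
      have hnw : ‖w‖ ≤ δ := by
        rw [hwdef, norm_smul]
        calc ‖t‖ * ‖w₀‖ ≤ 1 * ‖w₀‖ := by
              apply mul_le_mul_of_nonneg_right _ (norm_nonneg _)
              rw [Real.norm_eq_abs, abs_le]; exact ⟨by linarith [htI.1], htI.2⟩
          _ = ‖w₀‖ := one_mul _
          _ ≤ δ := hw₀n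
      have hy' : y = f (x + w) - Real.sqrt (δ^2 - ‖w‖^2) := by
        have : f (x + w) - Real.sqrt (δ^2 - ‖w‖^2) - y = 0 := hgt
        linarith
      have hd : dist (pmk x y) (pmk (x + w) (f (x + w))) ≤ δ := by
        rw [dist_pmk]
        have hdxz : dist x (x + w) = ‖w‖ := by rw [dist_eq_norm]; simp
        rw [hdxz]
        have hval : (y - f (x + w))^2 = δ^2 - ‖w‖^2 := by
          rw [hy']
          have : f (x + w) - Real.sqrt (δ ^ 2 - ‖w‖ ^ 2) - f (x + w) = - Real.sqrt (δ^2 - ‖w‖^2) := by ring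
          rw [this, neg_sq, Real.sq_sqrt (by nlinarith [norm_nonneg w])]
        rw [hval]
        have : ‖w‖ ^ 2 + (δ ^ 2 - ‖w‖ ^ 2) = δ^2 := by ring
        rw [this, Real.sqrt_sq (le_of_lt hδ)]
      exact le_trans (infDist_le_dist_of_mem (s := gph f) rfl) hd

end Aux

lemma closure_congr_open {X : Type*} [TopologicalSpace X] {s t U : Set X}
    (hU : IsOpen U) (h : s ∩ U = t ∩ U) : closure s ∩ U = closure t ∩ U := by
  have key : ∀ s t : Set X, s ∩ U = t ∩ U → closure s ∩ U ⊆ closure t ∩ U := by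
    intro s t h x hx
    have : x ∈ closure (U ∩ s) := hU.inter_closure ⟨hx.2, hx.1⟩
    rw [inter_comm, h, inter_comm] at this
    exact ⟨closure_mono inter_subset_right this, hx.2⟩
  exact subset_antisymm (key s t h) (key t s h.symm)

lemma frontier_congr_open {X : Type*} [TopologicalSpace X] {s t U : Set X}
    (hU : IsOpen U) (h : s ∩ U = t ∩ U) : frontier s ∩ U = frontier t ∩ U := by
  have hi : interior s ∩ U = interior t ∩ U := by
    rw [← hU.interior_eq, ← interior_inter, h, interior_inter, hU.interior_eq]
  have hc := closure_congr_open hU h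
  simp only [frontier]
  ext x
  constructor
  · rintro ⟨⟨h1, h2⟩, h3⟩
    refine ⟨⟨(hc ▸ (⟨h1, h3⟩ : x ∈ closure s ∩ U) : x ∈ closure t ∩ U).1, fun hit => ?_⟩, h3⟩
    exact h2 (hi.symm ▸ (⟨hit, h3⟩ : x ∈ interior t ∩ U) : x ∈ interior s ∩ U).1
  · rintro ⟨⟨h1, h2⟩, h3⟩
    refine ⟨⟨(hc.symm ▸ (⟨h1, h3⟩ : x ∈ closure t ∩ U) : x ∈ closure s ∩ U).1, fun hit => ?_⟩, h3⟩
    exact h2 (hi ▸ (⟨hit, h3⟩ : x ∈ interior s ∩ U) : x ∈ interior t ∩ U).1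

lemma ball_subset_open {d : ℕ} {A : Set (Euc d)} (hA : IsOpen A)
    {q : Euc d} (hq : q ∈ A) {δ : ℝ}
    (hdisj : ∀ x ∈ ball q δ, x ∉ frontier A) : ball q δ ⊆ A := by
  have hconn : IsPreconnected (ball q δ) := (convex_ball q δ).isPreconnected
  have hsub : ball q δ ⊆ A ∪ (closure A)ᶜ := by
    intro x hx
    by_cases hxA : x ∈ closure A
    · left
      have hnf : x ∉ frontier A := hdisj x hx
      rw [frontier, hA.interior_eq] at hnf
      by_contra hc
      exact hnf ⟨hxA, hc⟩
    · right; exact hxA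
  by_cases hδ : 0 < δ
  · exact IsPreconnected.subset_left_of_subset_union hA isClosed_closure.isOpen_compl
      (disjoint_compl_right.mono_left subset_closure) hsub ⟨q, mem_ball_self hδ, hq⟩ hconn
  · intro x hx; exact absurd hx (by simp [ball_eq_empty.mpr (le_of_not_gt hδ)])

/-- If `A ⊆ ℝ^d` is a `Λ`-Lipschitz domain with bounded boundary, then
there is `δ₀ > 0` such that for every `δ ∈ (0, δ₀]`, the inner set
`A_δ = {x ∈ A : dist(x, ∂A) > δ}` is again a `Λ`-Lipschitz domain. -/
theorem inner_set_is_lipschitz_domain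
    (d : ℕ) (hd : 2 ≤ d) (Λ : ℝ) (hΛ : 0 ≤ Λ)
    (A : Set (Euc d)) (hA : IsLipschitzDomain d Λ A) :
    ∃ δ₀ > 0, ∀ δ ∈ Set.Ioc (0 : ℝ) δ₀,
      IsLipschitzDomain d Λ { x ∈ A | δ < Metric.infDist x (frontier A) } := by
  obtain ⟨hAopen, hAbd, hchart⟩ := hA
  rcases eq_empty_or_nonempty (frontier A) with hFe | hFne
  · refine ⟨1, one_pos, fun δ hδ => ?_⟩
    have hempty : { x ∈ A | δ < Metric.infDist x (frontier A) } = ∅ := by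
      ext x
      simp only [mem_setOf_eq, mem_empty_iff_false, iff_false, not_and]
      intro _
      rw [hFe, infDist_empty]
      exact not_lt.mpr (le_of_lt hδ.1)
    rw [hempty]
    refine ⟨isOpen_empty, by simp, by simp⟩
  · -- Charts and Lebesgue number
    have hFcomp : IsCompact (frontier A) :=
      Metric.isCompact_of_isClosed_isBounded isClosed_frontier hAbd
    choose V hVopen hVmem T f hLip hgraph using fun i : frontier A => hchart i i.2
    have hcover : frontier A ⊆ ⋃ i : frontier A, V i :=
      fun p hp => mem_iUnion.mpr ⟨⟨p, hp⟩, hVmem ⟨p, hp⟩⟩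
    obtain ⟨r, hr, hleb⟩ := lebesgue_number_lemma_of_metric hFcomp hVopen hcover
    refine ⟨r/4, by positivity, fun δ hδI => ?_⟩
    obtain ⟨hδ0, hδr⟩ := hδI
    set Aδ := { x ∈ A | δ < Metric.infDist x (frontier A) } with hAδdef
    have hAδopen : IsOpen Aδ := by
      have : Aδ = A ∩ {x | δ < infDist x (frontier A)} := rfl
      rw [this]
      exact hAopen.inter (isOpen_lt continuous_const (continuous_infDist_pt (frontier A)))
    have hAδsub : Aδ ⊆ A := fun x hx => hx.1
    have hclos : closure Aδ ⊆ {x | δ ≤ infDist x (frontier A)} :=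
      closure_minimal (fun x hx => le_of_lt hx.2)
        (isClosed_le continuous_const (continuous_infDist_pt (frontier A)))
    -- frontier points of Aδ lie in A at distance exactly δ from the boundary
    have hfr : ∀ q ∈ frontier Aδ, q ∈ A ∧ infDist q (frontier A) = δ := by
      intro q hq
      have hqc : q ∈ closure Aδ := hq.1
      have hqn : q ∉ Aδ := by
        rw [frontier, hAδopen.interior_eq] at hq
        exact hq.2
      have hge : δ ≤ infDist q (frontier A) := hclos hqc
      have hqnF : q ∉ frontier A := fun h => by
        rw [infDist_zero_of_mem h] at hge; linarith
      have hqA : q ∈ A := by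
        have h1 : q ∈ closure A := closure_mono hAδsub hqc
        by_contra hc
        refine hqnF ?_
        rw [frontier, hAopen.interior_eq]
        exact ⟨h1, hc⟩
      have hle : infDist q (frontier A) ≤ δ := not_lt.mp fun h => hqn ⟨hqA, h⟩
      exact ⟨hqA, le_antisymm hle hge⟩
    refine ⟨hAδopen, ?_, ?_⟩
    · -- boundedness of the frontier
      refine (hAbd.cthickening (δ := δ + 1)).subset (fun q hq => ?_)
      obtain ⟨-, hqd⟩ := hfr q hq
      have : infDist q (frontier A) < δ + 1 := by rw [hqd]; linarith
      obtain ⟨z, hz, hdz⟩ := (infDist_lt_iff hFne).mp this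
      exact mem_cthickening_of_dist_le q z _ _ hz (le_of_lt hdz)
    · -- charts for Aδ
      intro q hq
      obtain ⟨hqA, hqd⟩ := hfr q hq
      obtain ⟨p, hpF, hpd⟩ := isClosed_frontier.exists_infDist_eq_dist hFne q
      have hdqp : dist q p = δ := by rw [← hpd, hqd]
      obtain ⟨i, hiV⟩ := hleb p hpF
      have hpV : p ∈ V i := hiV (mem_ball_self hr)
      -- basic inclusions
      have hballV : ball q δ ⊆ V i := by
        intro x hx
        apply hiV
        rw [mem_ball] at hx ⊢
        have h1 := dist_triangle x q p
        have h2 : dist q p = δ := hdqp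
        have : dist x p < 2 * δ := by linarith
        linarith
      have hballA : ball q δ ⊆ A := by
        apply ball_subset_open hAopen hqA
        intro x hx hxF
        have h1 : infDist q (frontier A) ≤ dist q x := infDist_le_dist_of_mem hxF
        rw [mem_ball, dist_comm] at hx
        rw [hqd] at h1
        linarith
      -- chart data in the model space
      have hTinj : Function.Injective (T i) := (T i).injective
      have hTVopen : IsOpen (T i '' V i) := (T i).toHomeomorph.isOpen_image.mpr (hVopen i)
      have hBV : (T i '' A) ∩ (T i '' V i) = epi (f i) ∩ (T i '' V i) := by
        have h2 := hgraph i
        rw [Set.image_inter hTinj] at h2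
        rw [h2, inter_comm]
        rfl
      have hfrB : frontier (T i '' A) ∩ (T i '' V i) = gph (f i) ∩ (T i '' V i) := by
        rw [frontier_congr_open hTVopen hBV, frontier_epi (hLip i).continuous]
      have hfrB' : T i '' frontier A = frontier (T i '' A) :=
        (T i).toHomeomorph.image_frontier A
      have hTpF : T i p ∈ frontier (T i '' A) := by
        rw [← hfrB']; exact mem_image_of_mem _ hpF
      have hTpgph : T i p ∈ gph (f i) := by
        have h3 : T i p ∈ frontier (T i '' A) ∩ (T i '' V i) := ⟨hTpF, mem_image_of_mem _ hpV⟩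
        rw [hfrB] at h3
        exact h3.1
      -- the key pointwise equivalence on the ball
      have hiff : ∀ u ∈ ball q δ, (u ∈ Aδ ↔ supc (f i) δ (fstP (T i u)) < sndP (T i u)) := by
        intro u hu
        have huA : u ∈ A := hballA hu
        have huV : u ∈ V i := hballV hu
        have hepi : f i (fstP (T i u)) < sndP (T i u) := by
          have h4 : T i u ∈ T i '' (A ∩ V i) := mem_image_of_mem _ ⟨huA, huV⟩
          rw [hgraph i] at h4
          exact h4.2
        have h1 : infDist u (frontier A) = infDist (T i u) (frontier (T i '' A)) := by
          rw [← hfrB', Metric.infDist_image (T i).isometry]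
        have hdTuTp : dist (T i u) (T i p) < 2*δ := by
          rw [(T i).dist_eq]
          have h5 := dist_triangle u q p
          rw [mem_ball] at hu
          linarith [hdqp]
        have hswap : infDist (T i u) (frontier (T i '' A)) ≤ δ ↔
            infDist (T i u) (gph (f i)) ≤ δ := by
          constructor
          · intro hle
            obtain ⟨z, hz, hzd⟩ := isClosed_frontier.exists_infDist_eq_dist ⟨T i p, hTpF⟩ (T i u)
            have hduz : dist (T i u) z ≤ δ := by rw [← hzd]; exact hle
            have hzr : z ∈ ball (T i p) r := by
              rw [mem_ball]
              have h6 := dist_triangle z (T i u) (T i p)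
              rw [dist_comm z (T i u)] at h6
              have : dist z (T i p) < 3 * δ := by linarith
              linarith
            have hzV : z ∈ T i '' V i := by
              apply image_mono hiV
              rw [(T i).image_ball]
              exact hzr
            have hzg : z ∈ gph (f i) := by
              have h7 : z ∈ frontier (T i '' A) ∩ (T i '' V i) := ⟨hz, hzV⟩
              rw [hfrB] at h7
              exact h7.1
            exact le_trans (infDist_le_dist_of_mem hzg) hduz
          · intro hle
            obtain ⟨z, hz, hzd⟩ := (isClosed_gph (hLip i).continuous).exists_infDist_eq_dist
              (gph_nonempty (f i)) (T i u)
            have hduz : dist (T i u) z ≤ δ := by rw [← hzd]; exact hle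
            have hzr : z ∈ ball (T i p) r := by
              rw [mem_ball]
              have h6 := dist_triangle z (T i u) (T i p)
              rw [dist_comm z (T i u)] at h6
              have : dist z (T i p) < 3 * δ := by linarith
              linarith
            have hzV : z ∈ T i '' V i := by
              apply image_mono hiV
              rw [(T i).image_ball]
              exact hzr
            have hzfr : z ∈ frontier (T i '' A) := by
              have h7 : z ∈ gph (f i) ∩ (T i '' V i) := ⟨hz, hzV⟩
              rw [← hfrB] at h7
              exact h7.1
            exact le_trans (infDist_le_dist_of_mem hzfr) hduz
        have hmain : infDist (T i u) (gph (f i)) ≤ δ ↔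
            sndP (T i u) ≤ supc (f i) δ (fstP (T i u)) :=
          infDist_gph_le_iff (hLip i).continuous hδ0 hepi
        constructor
        · intro huAδ
          by_contra hnot
          have h8 := hswap.mpr (hmain.mpr (not_lt.mp hnot))
          rw [← h1] at h8
          exact absurd huAδ.2 (not_lt.mpr h8)
        · intro hlt
          refine ⟨huA, ?_⟩
          by_contra hnot
          have h8 : infDist (T i u) (frontier (T i '' A)) ≤ δ := by
            rw [← h1]; exact not_lt.mp hnot
          exact absurd hlt (not_lt.mpr (hmain.mp (hswap.mp h8)))
      -- assemble the chart
      refine ⟨ball q δ, isOpen_ball, mem_ball_self hδ0, T i, supc (f i) δ,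
        supc_lipschitz (hLip i) (le_of_lt hδ0), ?_⟩
      ext v
      constructor
      · rintro ⟨u, ⟨hu1, hu2⟩, rfl⟩
        exact ⟨mem_image_of_mem _ hu2, (hiff u hu2).mp hu1⟩
      · rintro ⟨⟨u, hu2, rfl⟩, hv⟩
        exact ⟨u, ⟨(hiff u hu2).mpr hv, hu2⟩, rfl⟩
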